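/- Let P be an irreducible stochastic matrix on states {1,...,n} with stationary distribution π, and let M(i,j) denote the mean weighted first passage time from i to j with mean weight matrix W (i.e., M satisfies M = -P[M]_dg + (P∘W)11^T + PM where ∘ is the entrywise product). Then the diagonal satisfies M(i,i) = (π(P∘W)1)/π(i) for every state i. -/

import Mathlib

open Matrix BigOperators

/-- If `M` satisfies the mean weighted first-passage-time recursion
`(I - P) M = (P ∘ W) 1 1ᵀ - P [M]_dg`, then the diagonal satisfies
`M(i,i) = (π (P∘W) 1) / π(i)` for every state `i`. -/
theorem stmt_4 {n : ℕ} (P W M : Matrix (Fin n) (Fin n) ℝ) (pv : Fin n → ℝ)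
    (hP0 : ∀ i j, 0 ≤ P i j) (hProw : ∀ i, ∑ j, P i j = 1)
    (hirr : ∀ i j, ∃ k : ℕ, 0 < (P ^ k) i j)
    (hpiP : Matrix.vecMul pv P = pv) (hpi1 : ∑ i, pv i = 1) (hpipos : ∀ i, 0 < pv i)
    (hM : (1 - P) * M =
        Matrix.hadamard P W * Matrix.of (fun _ _ => (1 : ℝ)) -
          P * Matrix.diagonal (fun i => M i i)) :
    ∀ i, M i i = (∑ a, ∑ k, pv a * (P a k * W a k)) / pv i := by
  intro i
  have h := congrFun (congrArg (fun A => Matrix.vecMul pv A) hM) i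
  rw [← Matrix.vecMul_vecMul, Matrix.vecMul_sub, Matrix.vecMul_one, hpiP, sub_self,
    Matrix.zero_vecMul, Matrix.vecMul_sub, ← Matrix.vecMul_vecMul pv P, hpiP] at h
  have hL : (0 : Fin n → ℝ) i = 0 := rfl
  rw [hL] at h
  simp only [Pi.sub_apply, Matrix.vecMul_diagonal] at h
  have hA : Matrix.vecMul pv (Matrix.hadamard P W * Matrix.of (fun _ _ => (1 : ℝ))) i
      = ∑ a, ∑ k, pv a * (P a k * W a k) := by
    simp [Matrix.vecMul, Matrix.mul_apply, Matrix.hadamard, dotProduct, Finset.mul_sum]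
  rw [hA] at h
  have hne : pv i ≠ 0 := (hpipos i).ne'
  field_simp
  simp only [mul_assoc]
  linarith [h]
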